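/- If every triangle in a geodesic metric space X whose vertices lie on a fixed (1,c)-quasi-geodesic γ and whose sides are geodesics is λ'-thin, then γ is at Hausdorff distance at most H from any geodesic connecting its endpoints, where H is bounded linearly in λ' + c (with multiplicative constant independent of λ', c ≥ 1). -/

import Mathlib

open Metric Set

/-- `γ` restricted to `[a,b]` is a geodesic (isometric embedding of the interval). -/
def IsGeodesicOn {X : Type*} [MetricSpace X] (γ : ℝ → X) (a b : ℝ) : Prop :=
  ∀ s ∈ Set.Icc a b, ∀ t ∈ Set.Icc a b, dist (γ s) (γ t) = |s - t|

/-- A geodesic metric space: any two points are joined by a geodesic. -/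
def GeodesicSpace (X : Type*) [MetricSpace X] : Prop :=
  ∀ x y : X, ∃ γ : ℝ → X, γ 0 = x ∧ γ (dist x y) = y ∧ IsGeodesicOn γ 0 (dist x y)

lemma IsGeodesicOn.continuousOn {X : Type*} [MetricSpace X] {g : ℝ → X} {a b : ℝ}
    (h : IsGeodesicOn g a b) : ContinuousOn g (Set.Icc a b) := by
  refine (LipschitzOnWith.of_dist_le_mul (K := 1) fun s hs t ht => ?_).continuousOn
  rw [h s hs t ht, NNReal.coe_one, one_mul, Real.dist_eq]

lemma geo_img_compact {X : Type*} [MetricSpace X] {g : ℝ → X} {d : ℝ}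
    (h : IsGeodesicOn g 0 d) : IsCompact (g '' Set.Icc 0 d) :=
  isCompact_Icc.image_of_continuousOn h.continuousOn

lemma geo_img_nonempty {X : Type*} [MetricSpace X] {g : ℝ → X} {d : ℝ} (hd : 0 ≤ d) :
    (g '' Set.Icc 0 d).Nonempty :=
  (Set.nonempty_Icc.2 hd).image _

lemma natpow_helper (n : ℕ) (hn : 27 ≤ n) : 7 * (n + 4) < 2 ^ (n - 1) := by
  induction n, hn using Nat.le_induction with
  | base => norm_num
  | succ n hn ih =>
    have h1 : n - 1 + 1 = n := by omega
    have h2 : (2 : ℕ) ^ n = 2 ^ (n - 1) * 2 := by rw [← pow_succ, h1]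
    have h3 : n + 1 - 1 = n := by omega
    rw [h3, h2]
    omega

/-- The thin-triangles hypothesis. -/
abbrev ThinHyp (X : Type) [MetricSpace X] (lam a b : ℝ) (γ : ℝ → X) : Prop :=
  ∀ u ∈ Set.Icc a b, ∀ v ∈ Set.Icc a b, ∀ w ∈ Set.Icc a b,
    ∀ g₁ g₂ g₃ : ℝ → X,
    IsGeodesicOn g₁ 0 (dist (γ u) (γ v)) → g₁ 0 = γ u → g₁ (dist (γ u) (γ v)) = γ v →
    IsGeodesicOn g₂ 0 (dist (γ v) (γ w)) → g₂ 0 = γ v → g₂ (dist (γ v) (γ w)) = γ w →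
    IsGeodesicOn g₃ 0 (dist (γ u) (γ w)) → g₃ 0 = γ u → g₃ (dist (γ u) (γ w)) = γ w →
    (∀ z ∈ g₁ '' Set.Icc 0 (dist (γ u) (γ v)),
      Metric.infDist z (g₂ '' Set.Icc 0 (dist (γ v) (γ w)) ∪
        g₃ '' Set.Icc 0 (dist (γ u) (γ w))) ≤ lam) ∧
    (∀ z ∈ g₂ '' Set.Icc 0 (dist (γ v) (γ w)),
      Metric.infDist z (g₁ '' Set.Icc 0 (dist (γ u) (γ v)) ∪
        g₃ '' Set.Icc 0 (dist (γ u) (γ w))) ≤ lam) ∧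
    (∀ z ∈ g₃ '' Set.Icc 0 (dist (γ u) (γ w)),
      Metric.infDist z (g₁ '' Set.Icc 0 (dist (γ u) (γ v)) ∪
        g₂ '' Set.Icc 0 (dist (γ v) (γ w))) ≤ lam)

/-- Lemma A: binary subdivision. Any point on any geodesic between two γ-points of
parameter distance at most `lam * 2^n` is within `(n+2)lam + c` of the image of γ. -/
lemma lemmaA {X : Type} [MetricSpace X] (GS : GeodesicSpace X)
    {lam c a b : ℝ} (hlam : 1 ≤ lam) (hc : 1 ≤ c) {γ : ℝ → X}
    (hqg : ∀ s ∈ Set.Icc a b, ∀ t ∈ Set.Icc a b,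
        |s - t| - c ≤ dist (γ s) (γ t) ∧ dist (γ s) (γ t) ≤ |s - t| + c)
    (thin : ThinHyp X lam a b γ) :
    ∀ n : ℕ, ∀ u ∈ Set.Icc a b, ∀ v ∈ Set.Icc a b, |u - v| ≤ lam * 2 ^ n →
      ∀ g : ℝ → X, IsGeodesicOn g 0 (dist (γ u) (γ v)) → g 0 = γ u →
        g (dist (γ u) (γ v)) = γ v →
      ∀ x ∈ g '' Set.Icc 0 (dist (γ u) (γ v)),
        Metric.infDist x (γ '' Set.Icc a b) ≤ ((n : ℝ) + 2) * lam + c := by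
  intro n
  induction n with
  | zero =>
    intro u hu v hv hlen g hg hg0 hgd x hx
    obtain ⟨r, hr, rfl⟩ := hx
    have hda : dist (g r) (γ u) = r := by
      rw [← hg0]
      rw [hg r hr 0 ⟨le_rfl, dist_nonneg⟩, sub_zero, abs_of_nonneg hr.1]
    have h1 : Metric.infDist (g r) (γ '' Set.Icc a b) ≤ dist (g r) (γ u) :=
      Metric.infDist_le_dist_of_mem (Set.mem_image_of_mem γ hu)
    have h2 : dist (γ u) (γ v) ≤ |u - v| + c := (hqg u hu v hv).2
    have : r ≤ dist (γ u) (γ v) := hr.2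
    rw [pow_zero, mul_one] at hlen
    push_cast
    linarith [hda ▸ h1]
  | succ n ih =>
    intro u hu v hv hlen g hg hg0 hgd x hx
    set m : ℝ := (u + v) / 2 with hm_def
    have hm : m ∈ Set.Icc a b := by
      constructor
      · have := hu.1; have := hv.1; simp only [hm_def]; linarith
      · have := hu.2; have := hv.2; simp only [hm_def]; linarith
    obtain ⟨g1, hg10, hg1d, hg1geo⟩ := GS (γ u) (γ m)
    obtain ⟨g2, hg20, hg2d, hg2geo⟩ := GS (γ m) (γ v)
    have key := (thin u hu m hm v hv g1 g2 g hg1geo hg10 hg1d hg2geo hg20 hg2d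
      hg hg0 hgd).2.2 x hx
    have hScomp : IsCompact (g1 '' Set.Icc 0 (dist (γ u) (γ m)) ∪
        g2 '' Set.Icc 0 (dist (γ m) (γ v))) :=
      (geo_img_compact hg1geo).union (geo_img_compact hg2geo)
    have hSne : (g1 '' Set.Icc 0 (dist (γ u) (γ m)) ∪
        g2 '' Set.Icc 0 (dist (γ m) (γ v))).Nonempty :=
      ⟨g1 0, Or.inl (Set.mem_image_of_mem g1 ⟨le_rfl, dist_nonneg⟩)⟩
    obtain ⟨w, hw, hweq⟩ := hScomp.exists_infDist_eq_dist hSne x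
    have hxw : dist x w ≤ lam := hweq ▸ key
    have hhalf1 : |u - m| ≤ lam * 2 ^ n := by
      have h1 : u - m = (u - v) / 2 := by rw [hm_def]; ring
      rw [h1, abs_div, abs_two]
      rw [pow_succ] at hlen
      linarith
    have hhalf2 : |m - v| ≤ lam * 2 ^ n := by
      have h1 : m - v = (u - v) / 2 := by rw [hm_def]; ring
      rw [h1, abs_div, abs_two]
      rw [pow_succ] at hlen
      linarith
    have hwbound : Metric.infDist w (γ '' Set.Icc a b) ≤ ((n : ℝ) + 2) * lam + c := by
      rcases hw with hw | hw
      · exact ih u hu m hm hhalf1 g1 hg1geo hg10 hg1d w hw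
      · exact ih m hm v hv hhalf2 g2 hg2geo hg20 hg2d w hw
    have := Metric.infDist_le_infDist_add_dist (x := x) (y := w) (s := γ '' Set.Icc a b)
    push_cast
    linarith

/-- Lemma B: any geodesic joining the endpoints of γ lies within `30(lam+c)` of the image of γ. -/
lemma lemmaB {X : Type} [MetricSpace X] (GS : GeodesicSpace X)
    {lam c a b : ℝ} (hlam : 1 ≤ lam) (hc : 1 ≤ c) (hab : a ≤ b) {γ : ℝ → X}
    (hγc : ContinuousOn γ (Set.Icc a b))
    (hqg : ∀ s ∈ Set.Icc a b, ∀ t ∈ Set.Icc a b,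
        |s - t| - c ≤ dist (γ s) (γ t) ∧ dist (γ s) (γ t) ≤ |s - t| + c)
    (thin : ThinHyp X lam a b γ)
    (α : ℝ → X) (hαgeo : IsGeodesicOn α 0 (dist (γ a) (γ b)))
    (hα0 : α 0 = γ a) (hαL : α (dist (γ a) (γ b)) = γ b) :
    ∀ x ∈ α '' Set.Icc 0 (dist (γ a) (γ b)),
      Metric.infDist x (γ '' Set.Icc a b) ≤ 30 * (lam + c) := by
  set L : ℝ := dist (γ a) (γ b) with hL_def
  have hL0 : 0 ≤ L := dist_nonneg
  set Γ : Set X := γ '' Set.Icc a b with hΓ_def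
  have hΓcomp : IsCompact Γ := isCompact_Icc.image_of_continuousOn hγc
  have hΓne : Γ.Nonempty := (Set.nonempty_Icc.2 hab).image _
  set K : Set X := α '' Set.Icc 0 L with hK_def
  have hKcomp : IsCompact K := isCompact_Icc.image_of_continuousOn hαgeo.continuousOn
  have hKne : K.Nonempty := (Set.nonempty_Icc.2 hL0).image _
  obtain ⟨x₀, hx₀K, hmax⟩ := hKcomp.exists_isMaxOn hKne
    ((continuous_infDist_pt Γ).continuousOn)
  set D : ℝ := Metric.infDist x₀ Γ with hD_def
  suffices hgoal : D ≤ 30 * (lam + c) by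
    intro x hx
    exact le_trans (hmax hx) hgoal
  by_contra hD
  push_neg at hD
  have hlam0 : (0:ℝ) < lam := by linarith
  have hc0 : (0:ℝ) < c := by linarith
  have hD0 : 0 < D := by linarith
  obtain ⟨s₀, hs₀, hx₀eq⟩ := hx₀K
  have hmemab : ∀ t ∈ Set.Icc a b, γ t ∈ Γ := fun t ht => Set.mem_image_of_mem γ ht
  have hDle : ∀ p ∈ Γ, D ≤ dist x₀ p := fun p hp => Metric.infDist_le_dist_of_mem hp
  have haa : dist x₀ (γ a) = s₀ := by
    rw [← hx₀eq, ← hα0, hαgeo s₀ hs₀ 0 ⟨le_rfl, hL0⟩, sub_zero, abs_of_nonneg hs₀.1]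
  have hbb : dist x₀ (γ b) = L - s₀ := by
    rw [← hx₀eq, ← hαL, hαgeo s₀ hs₀ L ⟨hL0, le_rfl⟩, abs_of_nonpos (by linarith [hs₀.2])]
    ring
  -- choice of t_y
  obtain ⟨ty, hty, htyd, htyE⟩ :
      ∃ ty, ty ∈ Set.Icc a b ∧ dist x₀ (γ ty) ≤ 3 * D ∧
        ∀ p : X, dist p (γ a) ≤ dist (γ a) (γ ty) → D ≤ dist x₀ p := by
    by_cases hcase : s₀ ≤ 2 * D
    · refine ⟨a, Set.left_mem_Icc.2 hab, by rw [haa]; linarith, fun p hp => ?_⟩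
      rw [dist_self] at hp
      have hpa : p = γ a := by
        have := dist_nonneg (x := p) (y := γ a)
        have : dist p (γ a) = 0 := le_antisymm hp this
        exact dist_eq_zero.1 this
      rw [hpa]
      exact hDle _ (hmemab a (Set.left_mem_Icc.2 hab))
    · push_neg at hcase
      have hyIcc : s₀ - 2 * D ∈ Set.Icc 0 L := ⟨by linarith, by linarith [hs₀.2]⟩
      have hFy : Metric.infDist (α (s₀ - 2 * D)) Γ ≤ D := hmax (Set.mem_image_of_mem α hyIcc)
      obtain ⟨q, hqΓ, hqeq⟩ := hΓcomp.exists_infDist_eq_dist hΓne (α (s₀ - 2 * D))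
      obtain ⟨ty, htymem, rfl⟩ := hqΓ
      have hdy : dist (α (s₀ - 2 * D)) (γ ty) ≤ D := hqeq ▸ hFy
      have hdxy : dist x₀ (α (s₀ - 2 * D)) = 2 * D := by
        rw [← hx₀eq, hαgeo s₀ hs₀ (s₀ - 2 * D) hyIcc]
        rw [abs_of_nonneg (by linarith)]; ring
      refine ⟨ty, htymem, ?_, fun p hp => ?_⟩
      · calc dist x₀ (γ ty) ≤ dist x₀ (α (s₀ - 2 * D)) + dist (α (s₀ - 2 * D)) (γ ty) :=
              dist_triangle _ _ _
          _ ≤ 2 * D + D := by rw [hdxy]; linarith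
          _ = 3 * D := by ring
      · have hga : dist (γ a) (α (s₀ - 2 * D)) = s₀ - 2 * D := by
          rw [← hα0, hαgeo 0 ⟨le_rfl, hL0⟩ (s₀ - 2 * D) hyIcc]
          rw [abs_of_nonpos (by linarith)]; ring
        have h1 : dist (γ a) (γ ty) ≤ s₀ - D := by
          calc dist (γ a) (γ ty) ≤ dist (γ a) (α (s₀ - 2 * D)) + dist (α (s₀ - 2 * D)) (γ ty) :=
                dist_triangle _ _ _
            _ ≤ (s₀ - 2 * D) + D := by rw [hga]; linarith
            _ = s₀ - D := by ring
        have h2 : dist x₀ (γ a) ≤ dist x₀ p + dist p (γ a) := dist_triangle _ _ _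
        rw [haa] at h2
        linarith
  -- choice of t_z
  obtain ⟨tz, htz, htzd, htzE⟩ :
      ∃ tz, tz ∈ Set.Icc a b ∧ dist x₀ (γ tz) ≤ 3 * D ∧
        ∀ p : X, dist p (γ b) ≤ dist (γ tz) (γ b) → D ≤ dist x₀ p := by
    by_cases hcase : L - s₀ ≤ 2 * D
    · refine ⟨b, Set.right_mem_Icc.2 hab, by rw [hbb]; linarith, fun p hp => ?_⟩
      rw [dist_self] at hp
      have hpb : p = γ b := by
        have := dist_nonneg (x := p) (y := γ b)
        have : dist p (γ b) = 0 := le_antisymm hp this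
        exact dist_eq_zero.1 this
      rw [hpb]
      exact hDle _ (hmemab b (Set.right_mem_Icc.2 hab))
    · push_neg at hcase
      have hzIcc : s₀ + 2 * D ∈ Set.Icc 0 L := ⟨by linarith [hs₀.1], by linarith⟩
      have hFz : Metric.infDist (α (s₀ + 2 * D)) Γ ≤ D := hmax (Set.mem_image_of_mem α hzIcc)
      obtain ⟨q, hqΓ, hqeq⟩ := hΓcomp.exists_infDist_eq_dist hΓne (α (s₀ + 2 * D))
      obtain ⟨tz, htzmem, rfl⟩ := hqΓ
      have hdz : dist (α (s₀ + 2 * D)) (γ tz) ≤ D := hqeq ▸ hFz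
      have hdxz : dist x₀ (α (s₀ + 2 * D)) = 2 * D := by
        rw [← hx₀eq, hαgeo s₀ hs₀ (s₀ + 2 * D) hzIcc]
        rw [abs_of_nonpos (by linarith)]; ring
      refine ⟨tz, htzmem, ?_, fun p hp => ?_⟩
      · calc dist x₀ (γ tz) ≤ dist x₀ (α (s₀ + 2 * D)) + dist (α (s₀ + 2 * D)) (γ tz) :=
              dist_triangle _ _ _
          _ ≤ 2 * D + D := by rw [hdxz]; linarith
          _ = 3 * D := by ring
      · have hgb : dist (α (s₀ + 2 * D)) (γ b) = L - s₀ - 2 * D := by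
          rw [← hαL, hαgeo (s₀ + 2 * D) hzIcc L ⟨hL0, le_rfl⟩]
          rw [abs_of_nonpos (by linarith)]; ring
        have h1 : dist (γ tz) (γ b) ≤ L - s₀ - D := by
          calc dist (γ tz) (γ b) ≤ dist (γ tz) (α (s₀ + 2 * D)) + dist (α (s₀ + 2 * D)) (γ b) :=
                dist_triangle _ _ _
            _ ≤ D + (L - s₀ - 2 * D) := by rw [hgb, dist_comm]; linarith
            _ = L - s₀ - D := by ring
        have h2 : dist x₀ (γ b) ≤ dist x₀ p + dist p (γ b) := dist_triangle _ _ _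
        rw [hbb] at h2
        linarith
  -- window size
  have hwin : |ty - tz| ≤ 6 * D + c := by
    have h1 := (hqg ty hty tz htz).1
    have h2 : dist (γ ty) (γ tz) ≤ dist x₀ (γ ty) + dist x₀ (γ tz) := by
      rw [dist_comm x₀ (γ ty)] at *
      exact dist_triangle _ _ _
    linarith
  -- geodesics
  obtain ⟨h, hh0, hhd, hhgeo⟩ := GS (γ ty) (γ b)
  obtain ⟨g1, hg10, hg1d, hg1geo⟩ := GS (γ a) (γ ty)
  obtain ⟨k1, hk10, hk1d, hk1geo⟩ := GS (γ ty) (γ tz)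
  obtain ⟨k2, hk20, hk2d, hk2geo⟩ := GS (γ tz) (γ b)
  -- triangle 1 : (a, ty, b) with sides g1, h, α
  have hx₀mem : x₀ ∈ α '' Set.Icc 0 (dist (γ a) (γ b)) := ⟨s₀, hs₀, hx₀eq⟩
  have thin1 := (thin a (Set.left_mem_Icc.2 hab) ty hty b (Set.right_mem_Icc.2 hab)
    g1 h α hg1geo hg10 hg1d hhgeo hh0 hhd hαgeo hα0 hαL).2.2 x₀ hx₀mem
  have hU1comp : IsCompact (g1 '' Set.Icc 0 (dist (γ a) (γ ty)) ∪
      h '' Set.Icc 0 (dist (γ ty) (γ b))) :=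
    (geo_img_compact hg1geo).union (geo_img_compact hhgeo)
  have hU1ne : (g1 '' Set.Icc 0 (dist (γ a) (γ ty)) ∪
      h '' Set.Icc 0 (dist (γ ty) (γ b))).Nonempty :=
    ⟨g1 0, Or.inl (Set.mem_image_of_mem g1 ⟨le_rfl, dist_nonneg⟩)⟩
  obtain ⟨x₁, hx₁U, hx₁eq⟩ := hU1comp.exists_infDist_eq_dist hU1ne x₀
  have hx₀x₁ : dist x₀ x₁ ≤ lam := hx₁eq ▸ thin1
  have hx₁h : x₁ ∈ h '' Set.Icc 0 (dist (γ ty) (γ b)) := by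
    rcases hx₁U with hx₁U | hx₁U
    · exfalso
      obtain ⟨r, hr, rfl⟩ := hx₁U
      have hd1 : dist (g1 r) (γ a) = r := by
        rw [← hg10, dist_comm, hg1geo 0 ⟨le_rfl, dist_nonneg⟩ r hr]
        rw [abs_of_nonpos (by linarith [hr.1])]; ring
      have := htyE (g1 r) (by rw [hd1]; exact hr.2)
      linarith
    · exact hx₁U
  -- triangle 2 : (ty, tz, b) with sides k1, k2, h
  have thin2 := (thin ty hty tz htz b (Set.right_mem_Icc.2 hab)
    k1 k2 h hk1geo hk10 hk1d hk2geo hk20 hk2d hhgeo hh0 hhd).2.2 x₁ hx₁h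
  have hU2comp : IsCompact (k1 '' Set.Icc 0 (dist (γ ty) (γ tz)) ∪
      k2 '' Set.Icc 0 (dist (γ tz) (γ b))) :=
    (geo_img_compact hk1geo).union (geo_img_compact hk2geo)
  have hU2ne : (k1 '' Set.Icc 0 (dist (γ ty) (γ tz)) ∪
      k2 '' Set.Icc 0 (dist (γ tz) (γ b))).Nonempty :=
    ⟨k1 0, Or.inl (Set.mem_image_of_mem k1 ⟨le_rfl, dist_nonneg⟩)⟩
  obtain ⟨x₂, hx₂U, hx₂eq⟩ := hU2comp.exists_infDist_eq_dist hU2ne x₁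
  have hx₁x₂ : dist x₁ x₂ ≤ lam := hx₂eq ▸ thin2
  have hx₀x₂ : dist x₀ x₂ ≤ 2 * lam := by
    calc dist x₀ x₂ ≤ dist x₀ x₁ + dist x₁ x₂ := dist_triangle _ _ _
      _ ≤ 2 * lam := by linarith
  have hx₂k1 : x₂ ∈ k1 '' Set.Icc 0 (dist (γ ty) (γ tz)) := by
    rcases hx₂U with hx₂U | hx₂U
    · exact hx₂U
    · exfalso
      obtain ⟨r, hr, rfl⟩ := hx₂U
      have hd2 : dist (k2 r) (γ b) = dist (γ tz) (γ b) - r := by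
        have heq := hk2geo r hr (dist (γ tz) (γ b)) ⟨dist_nonneg, le_rfl⟩
        rw [hk2d] at heq
        rw [heq, abs_of_nonpos (by linarith [hr.2])]; ring
      have := htzE (k2 r) (by rw [hd2]; linarith [hr.1])
      linarith
  -- choice of n
  have hexists : ∃ n : ℕ, 6 * D + c ≤ lam * 2 ^ n := by
    obtain ⟨n, hn⟩ := exists_nat_gt ((6 * D + c) / lam)
    refine ⟨n, ?_⟩
    have h1 : (6 * D + c) / lam < (n : ℝ) := hn
    have h2 : (n : ℝ) ≤ 2 ^ n := by
      have := Nat.lt_two_pow_self (n := n)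
      exact_mod_cast this.le
    have h3 : 6 * D + c < lam * n := by
      rw [div_lt_iff₀ hlam0] at h1; linarith [h1]
    nlinarith
  set n : ℕ := Nat.find hexists with hn_def
  have hfind : 6 * D + c ≤ lam * 2 ^ n := Nat.find_spec hexists
  have hn1 : 1 ≤ n := by
    rcases Nat.eq_zero_or_pos n with h0 | h0
    · exfalso
      rw [h0, pow_zero, mul_one] at hfind
      linarith
    · exact h0
  have hprev : lam * 2 ^ (n - 1) < 6 * D + c := by
    have := Nat.find_min hexists (show n - 1 < n by omega)
    push_neg at this
    exact this
  -- apply Lemma A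
  have hwinn : |ty - tz| ≤ lam * 2 ^ n := hwin.trans hfind
  have hA := lemmaA GS hlam hc hqg thin n ty hty tz htz hwinn k1 hk1geo hk10 hk1d x₂ hx₂k1
  have hchain : D ≤ ((n : ℝ) + 4) * lam + c := by
    have h1 : Metric.infDist x₀ Γ ≤ Metric.infDist x₂ Γ + dist x₀ x₂ :=
      Metric.infDist_le_infDist_add_dist
    have : D ≤ ((n : ℝ) + 2) * lam + c + 2 * lam := by
      rw [hD_def]; exact h1.trans (by linarith)
    linarith
  -- final arithmetic contradiction
  have hn30 : (30 : ℝ) < (n : ℝ) + 4 := by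
    have h1 : 30 * lam + 30 * c < ((n : ℝ) + 4) * lam + c := by linarith
    have h2 : 30 * lam < ((n : ℝ) + 4) * lam := by linarith
    exact lt_of_mul_lt_mul_right (by linarith [h2]) hlam0.le
  have hn27 : 27 ≤ n := by
    by_contra hlt
    push_neg at hlt
    have h26 : (n : ℝ) ≤ 26 := by exact_mod_cast Nat.le_of_lt_succ hlt
    linarith
  have hcbound : 29 * c < ((n : ℝ) + 4) * lam := by linarith
  have hpow : lam * 2 ^ (n - 1) < 7 * (((n : ℝ) + 4) * lam) := by
    have : 6 * D + c ≤ 6 * (((n : ℝ) + 4) * lam + c) + c := by linarith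
    nlinarith
  have h2pow : (2 : ℝ) ^ (n - 1) < 7 * ((n : ℝ) + 4) := by
    have := hpow
    nlinarith
  have hnat := natpow_helper n hn27
  have hcast : (7 : ℝ) * ((n : ℝ) + 4) < (2 : ℝ) ^ (n - 1) := by
    have : ((7 * (n + 4) : ℕ) : ℝ) < ((2 ^ (n - 1) : ℕ) : ℝ) := by exact_mod_cast hnat
    push_cast at this
    linarith
  linarith

theorem stmt19 :
    ∃ A : ℝ, ∀ (X : Type) [MetricSpace X], GeodesicSpace X →
      ∀ lam c : ℝ, 1 ≤ lam → 1 ≤ c →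
      ∀ a b : ℝ, a ≤ b → ∀ γ : ℝ → X, ContinuousOn γ (Set.Icc a b) →
      (∀ s ∈ Set.Icc a b, ∀ t ∈ Set.Icc a b,
        |s - t| - c ≤ dist (γ s) (γ t) ∧ dist (γ s) (γ t) ≤ |s - t| + c) →
      -- every geodesic triangle with vertices on γ is lam-thin:
      (∀ u ∈ Set.Icc a b, ∀ v ∈ Set.Icc a b, ∀ w ∈ Set.Icc a b,
        ∀ g₁ g₂ g₃ : ℝ → X,
        IsGeodesicOn g₁ 0 (dist (γ u) (γ v)) → g₁ 0 = γ u → g₁ (dist (γ u) (γ v)) = γ v →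
        IsGeodesicOn g₂ 0 (dist (γ v) (γ w)) → g₂ 0 = γ v → g₂ (dist (γ v) (γ w)) = γ w →
        IsGeodesicOn g₃ 0 (dist (γ u) (γ w)) → g₃ 0 = γ u → g₃ (dist (γ u) (γ w)) = γ w →
        (∀ z ∈ g₁ '' Set.Icc 0 (dist (γ u) (γ v)),
          Metric.infDist z (g₂ '' Set.Icc 0 (dist (γ v) (γ w)) ∪
            g₃ '' Set.Icc 0 (dist (γ u) (γ w))) ≤ lam) ∧
        (∀ z ∈ g₂ '' Set.Icc 0 (dist (γ v) (γ w)),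
          Metric.infDist z (g₁ '' Set.Icc 0 (dist (γ u) (γ v)) ∪
            g₃ '' Set.Icc 0 (dist (γ u) (γ w))) ≤ lam) ∧
        (∀ z ∈ g₃ '' Set.Icc 0 (dist (γ u) (γ w)),
          Metric.infDist z (g₁ '' Set.Icc 0 (dist (γ u) (γ v)) ∪
            g₂ '' Set.Icc 0 (dist (γ v) (γ w))) ≤ lam)) →
      ∀ α : ℝ → X, IsGeodesicOn α 0 (dist (γ a) (γ b)) →
        α 0 = γ a → α (dist (γ a) (γ b)) = γ b →
        Metric.hausdorffDist (γ '' Set.Icc a b) (α '' Set.Icc 0 (dist (γ a) (γ b)))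
          ≤ A * (lam + c) := by
  refine ⟨93, ?_⟩
  intro X _ GS lam c hlam hc a b hab γ hγc hqg thin α hαgeo hα0 hαL
  have hlam0 : (0:ℝ) < lam := by linarith
  have hc0 : (0:ℝ) < c := by linarith
  set L : ℝ := dist (γ a) (γ b) with hL_def
  have hL0 : 0 ≤ L := dist_nonneg
  set Γ : Set X := γ '' Set.Icc a b with hΓ_def
  have hΓcomp : IsCompact Γ := isCompact_Icc.image_of_continuousOn hγc
  have hΓne : Γ.Nonempty := (Set.nonempty_Icc.2 hab).image _
  set K : Set X := α '' Set.Icc 0 L with hK_def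
  set H : ℝ := 30 * (lam + c) with hH_def
  have hH0 : 0 ≤ H := by rw [hH_def]; linarith
  have hB : ∀ x ∈ K, Metric.infDist x Γ ≤ H :=
    lemmaB GS hlam hc hab hγc hqg thin α hαgeo hα0 hαL
  -- direction: every point of γ is close to α
  have hdir1 : ∀ x ∈ Γ, Metric.infDist x K ≤ 93 * (lam + c) := by
    rintro x ⟨t, ht, rfl⟩
    set T : Set ℝ := {s : ℝ | s ∈ Set.Icc 0 L ∧
      ∃ τ, τ ∈ Set.Icc a t ∧ dist (α s) (γ τ) ≤ H} with hT_def
    have hT0 : (0:ℝ) ∈ T := by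
      refine ⟨⟨le_rfl, hL0⟩, a, ⟨le_rfl, ht.1⟩, ?_⟩
      rw [hα0, dist_self]; exact hH0
    have hTne : T.Nonempty := ⟨0, hT0⟩
    have hTbdd : BddAbove T := ⟨L, fun s hs => hs.1.2⟩
    set sS : ℝ := sSup T with hsS_def
    have hsSmem : sS ∈ Set.Icc 0 L := ⟨le_csSup hTbdd hT0, csSup_le hTne fun s hs => hs.1.2⟩
    obtain ⟨s₁, hs₁T, hs₁gt⟩ := exists_lt_of_lt_csSup hTne (show sS - 1 < sS by linarith)
    have hs₁le : s₁ ≤ sS := le_csSup hTbdd hs₁T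
    obtain ⟨hs₁Icc, τ₁, hτ₁, hd₁⟩ := hs₁T
    obtain ⟨s', hs'Icc, hs'near, τ₂, hτ₂, hd₂⟩ :
        ∃ s', s' ∈ Set.Icc 0 L ∧ |s' - s₁| ≤ 2 ∧
          ∃ τ₂, τ₂ ∈ Set.Icc t b ∧ dist (α s') (γ τ₂) ≤ H := by
      by_cases hLs : sS < L
      · set s' : ℝ := min L (sS + 1) with hs'_def
        have hs'Icc : s' ∈ Set.Icc 0 L :=
          ⟨le_min hL0 (by linarith [hsSmem.1]), min_le_left _ _⟩
        have hgt : sS < s' := lt_min hLs (by linarith)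
        have hnotT : s' ∉ T := fun hmem => absurd (le_csSup hTbdd hmem) (not_le.2 hgt)
        have hs'K : α s' ∈ K := Set.mem_image_of_mem α hs'Icc
        obtain ⟨q, hqΓ, hqeq⟩ := hΓcomp.exists_infDist_eq_dist hΓne (α s')
        obtain ⟨τ, hτmem, rfl⟩ := hqΓ
        have hdq : dist (α s') (γ τ) ≤ H := hqeq ▸ hB _ hs'K
        have hτt : t ≤ τ := by
          by_contra hτt
          push_neg at hτt
          exact hnotT ⟨hs'Icc, τ, ⟨hτmem.1, hτt.le⟩, hdq⟩
        refine ⟨s', hs'Icc, ?_, τ, ⟨hτt, hτmem.2⟩, hdq⟩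
        rw [abs_of_nonneg (by linarith)]
        have : s' ≤ sS + 1 := min_le_right _ _
        linarith
      · push_neg at hLs
        have hsSL : sS = L := le_antisymm hsSmem.2 hLs
        refine ⟨L, ⟨hL0, le_rfl⟩, ?_, b, ⟨ht.2, le_rfl⟩, ?_⟩
        · rw [abs_of_nonneg (by linarith [hs₁Icc.2])]
          linarith [hsSL ▸ hs₁gt]
        · rw [hαL, dist_self]; exact hH0
    -- combine
    have hτ₁ab : τ₁ ∈ Set.Icc a b := ⟨hτ₁.1, hτ₁.2.trans ht.2⟩
    have hτ₂ab : τ₂ ∈ Set.Icc a b := ⟨ht.1.trans hτ₂.1, hτ₂.2⟩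
    have hαs : dist (α s₁) (α s') = |s₁ - s'| := hαgeo s₁ hs₁Icc s' hs'Icc
    have hαs2 : dist (α s₁) (α s') ≤ 2 := by
      rw [hαs, abs_sub_comm]; exact hs'near
    have hγτ : dist (γ τ₁) (γ τ₂) ≤ 2 * H + 2 := by
      calc dist (γ τ₁) (γ τ₂) ≤ dist (γ τ₁) (α s₁) + dist (α s₁) (γ τ₂) := dist_triangle _ _ _
        _ ≤ dist (γ τ₁) (α s₁) + (dist (α s₁) (α s') + dist (α s') (γ τ₂)) := by
            linarith [dist_triangle (α s₁) (α s') (γ τ₂)]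
        _ ≤ H + (2 + H) := by
            rw [dist_comm (γ τ₁) (α s₁)]
            linarith
        _ = 2 * H + 2 := by ring
    have hτdiff : τ₂ - τ₁ ≤ 2 * H + 2 + c := by
      have h1 := (hqg τ₁ hτ₁ab τ₂ hτ₂ab).1
      have h2 : τ₂ - τ₁ ≤ |τ₁ - τ₂| := by
        rw [abs_sub_comm]; exact le_abs_self _
      linarith
    have htτ₁ : |t - τ₁| ≤ 2 * H + 2 + c := by
      rw [abs_of_nonneg (by linarith [hτ₁.2])]
      linarith [hτ₂.1]
    have hγt : dist (γ t) (γ τ₁) ≤ 2 * H + 2 + 2 * c := by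
      have := (hqg t ht τ₁ hτ₁ab).2
      linarith
    have hfinal : dist (γ t) (α s₁) ≤ 3 * H + 2 * c + 2 := by
      calc dist (γ t) (α s₁) ≤ dist (γ t) (γ τ₁) + dist (γ τ₁) (α s₁) := dist_triangle _ _ _
        _ ≤ (2 * H + 2 + 2 * c) + H := by rw [dist_comm (γ τ₁) (α s₁)]; linarith
        _ = 3 * H + 2 * c + 2 := by ring
    have hmemK : α s₁ ∈ K := Set.mem_image_of_mem α hs₁Icc
    have := Metric.infDist_le_dist_of_mem hmemK (x := γ t)
    have hHval : 3 * H + 2 * c + 2 ≤ 93 * (lam + c) := by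
      rw [hH_def]; linarith
    linarith
  have hdir2 : ∀ x ∈ K, Metric.infDist x Γ ≤ 93 * (lam + c) := by
    intro x hx
    have := hB x hx
    rw [hH_def] at this
    linarith
  exact Metric.hausdorffDist_le_of_infDist (by linarith) hdir1 hdir2
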